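/- Let G be a countable group, and N₁, N₂ closed G-invariant subsets of Sub(G) such that N₂ admits a unique minimal closed G-invariant subset C. If N₁ ≼ N₂, then N₁ ≼ C. -/
import Mathlib


/-- The Chabauty topology on the space of subgroups of `G`. -/
noncomputable instance chabautyTopology {G : Type*} [Group G] :
    TopologicalSpace (Subgroup G) :=
  TopologicalSpace.induced
    (fun H : Subgroup G => fun g : G => @decide (g ∈ H) (Classical.propDecidable _))
    inferInstance

namespace ChabautyAux
open Topology

variable {G : Type*} [Group G]

noncomputable def chi (H : Subgroup G) : G → Bool :=
  fun g => @decide (g ∈ H) (Classical.propDecidable _)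

lemma chi_eq_true {H : Subgroup G} {g : G} : chi H g = true ↔ g ∈ H := by
  simp [chi]

lemma inducing_chi : IsInducing (chi (G := G)) := ⟨rfl⟩

lemma injective_chi : Function.Injective (chi (G := G)) := by
  intro H K h
  ext g
  have := congrFun h g
  rw [← chi_eq_true, ← chi_eq_true, this]

lemma isClosed_range_chi : IsClosed (Set.range (chi (G := G))) := by
  have : Set.range (chi (G := G)) =
      {u : G → Bool | u 1 = true} ∩
      (⋂ g : G, ⋂ h : G, {u : G → Bool | u g = true → u h = true → u (g * h) = true}) ∩
      (⋂ g : G, {u : G → Bool | u g = true → u g⁻¹ = true}) := by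
    ext u
    constructor
    · rintro ⟨H, rfl⟩
      refine ⟨⟨?_, ?_⟩, ?_⟩ <;> simp only [Set.mem_iInter, Set.mem_setOf_eq, chi_eq_true]
      · exact H.one_mem
      · intro g h hg hh; exact H.mul_mem hg hh
      · intro g hg; exact H.inv_mem hg
    · rintro ⟨⟨h1, hm⟩, hi⟩
      simp only [Set.mem_iInter, Set.mem_setOf_eq] at h1 hm hi
      refine ⟨⟨⟨⟨setOf (fun g => u g = true), fun ha hb => hm _ _ ha hb⟩, h1⟩,
        fun ha => hi _ ha⟩, ?_⟩
      funext g
      rcases Bool.eq_false_or_eq_true (u g) with hu | hu <;> rw [hu]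
      · exact chi_eq_true.mpr hu
      · refine Bool.eq_false_iff.mpr fun hx => ?_
        have hmem : u g = true := chi_eq_true.mp hx
        rw [hu] at hmem; exact Bool.false_ne_true hmem
  rw [this]
  refine IsClosed.inter (IsClosed.inter ?_ ?_) ?_
  · exact IsClosed.preimage (continuous_apply (1 : G) : Continuous fun u : G → Bool => u 1)
      (isClosed_discrete {b : Bool | b = true})
  · refine isClosed_iInter fun g => isClosed_iInter fun h => ?_
    have hc : Continuous fun u : G → Bool => ((u g, u h), u (g * h)) :=
      ((continuous_apply g).prodMk (continuous_apply h)).prodMk (continuous_apply (g * h))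
    exact IsClosed.preimage hc (isClosed_discrete
      {p : (Bool × Bool) × Bool | p.1.1 = true → p.1.2 = true → p.2 = true})
  · refine isClosed_iInter fun g => ?_
    have hc : Continuous fun u : G → Bool => (u g, u g⁻¹) :=
      (continuous_apply g).prodMk (continuous_apply g⁻¹)
    exact IsClosed.preimage hc (isClosed_discrete {p : Bool × Bool | p.1 = true → p.2 = true})

lemma closedEmbedding_chi : IsClosedEmbedding (chi (G := G)) :=
  ⟨⟨inducing_chi, injective_chi⟩, isClosed_range_chi⟩

instance : T2Space (Subgroup G) := closedEmbedding_chi.toIsEmbedding.t2Space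

instance : CompactSpace (Subgroup G) := closedEmbedding_chi.compactSpace

lemma isClosed_le_rel : IsClosed {p : Subgroup G × Subgroup G | p.1 ≤ p.2} := by
  have : {p : Subgroup G × Subgroup G | p.1 ≤ p.2} =
      ⋂ g : G, {p : Subgroup G × Subgroup G | chi p.1 g = true → chi p.2 g = true} := by
    ext p
    simp only [Set.mem_iInter, Set.mem_setOf_eq, chi_eq_true, SetLike.le_def]

  rw [this]
  refine isClosed_iInter fun g => ?_
  have hc : Continuous fun p : Subgroup G × Subgroup G => (chi p.1 g, chi p.2 g) :=
    (((continuous_apply g).comp ((inducing_chi.continuous).comp continuous_fst)).prodMk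
      ((continuous_apply g).comp ((inducing_chi.continuous).comp continuous_snd)))
  exact IsClosed.preimage hc (isClosed_discrete {q : Bool × Bool | q.1 = true → q.2 = true})

lemma isClosed_UE {A : Set (Subgroup G)} (hA : IsClosed A) :
    IsClosed {K : Subgroup G | ∃ H ∈ A, H ≤ K} := by
  have h1 : IsCompact ((A ×ˢ (Set.univ : Set (Subgroup G))) ∩
      {p : Subgroup G × Subgroup G | p.1 ≤ p.2}) :=
    ((hA.prod isClosed_univ).inter isClosed_le_rel).isCompact
  have h2 : {K : Subgroup G | ∃ H ∈ A, H ≤ K} =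
      Prod.snd '' ((A ×ˢ (Set.univ : Set (Subgroup G))) ∩
        {p : Subgroup G × Subgroup G | p.1 ≤ p.2}) := by
    ext K
    constructor
    · rintro ⟨H, hH, hle⟩
      exact ⟨(H, K), ⟨⟨hH, trivial⟩, hle⟩, rfl⟩
    · rintro ⟨⟨H, K'⟩, ⟨⟨hH, -⟩, hle⟩, rfl⟩
      exact ⟨H, hH, hle⟩
  rw [h2]
  exact (h1.image continuous_snd).isClosed

end ChabautyAux

/-- Conjugation invariance of a set of subgroups. -/
def ConjInvariant {G : Type*} [Group G] (A : Set (Subgroup G)) : Prop :=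
  ∀ (g : G), ∀ H ∈ A, Subgroup.map (MulAut.conj g).toMonoidHom H ∈ A

/-- If `N₁, N₂` are closed conjugation-invariant subsets of `Sub(G)`, `N₂` admits a
unique minimal closed invariant subset `C`, and `N₁ ≼ N₂`, then `N₁ ≼ C`. -/
theorem prec_unique_minimal {G : Type*} [Group G] [Countable G]
    (N₁ N₂ C : Set (Subgroup G))
    (hN₁c : IsClosed N₁) (hN₁inv : ConjInvariant N₁)
    (hN₂c : IsClosed N₂) (hN₂inv : ConjInvariant N₂)
    (hCsub : C ⊆ N₂) (hCc : IsClosed C) (hCne : C.Nonempty) (hCinv : ConjInvariant C)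
    (hCmin : ∀ D : Set (Subgroup G), D ⊆ C → IsClosed D → D.Nonempty → ConjInvariant D →
      D = C)
    (hCuniq : ∀ D : Set (Subgroup G), D ⊆ N₂ → IsClosed D → D.Nonempty → ConjInvariant D →
      (∀ E : Set (Subgroup G), E ⊆ D → IsClosed E → E.Nonempty → ConjInvariant E → E = D) →
      D = C)
    (hprec : ∃ H ∈ N₁, ∃ K ∈ N₂, H ≤ K) :
    ∃ H ∈ N₁, ∃ K ∈ C, H ≤ K := by
  classical
  obtain ⟨H₀, hH₀, K₀, hK₀, hle₀⟩ := hprec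
  set S : Set (Subgroup G) := N₂ ∩ {K | ∃ H ∈ N₁, H ≤ K} with hSdef
  have hSc : IsClosed S := hN₂c.inter (ChabautyAux.isClosed_UE hN₁c)
  have hSinv : ConjInvariant S := by
    rintro g K ⟨hK2, H, hH, hle⟩
    exact ⟨hN₂inv g K hK2, Subgroup.map _ H, hN₁inv g H hH, Subgroup.map_mono hle⟩
  have hK₀S : K₀ ∈ S := ⟨hK₀, H₀, hH₀, hle₀⟩
  set 𝒮 : Set (Set (Subgroup G)) :=
    {D | D ⊆ S ∧ IsClosed D ∧ D.Nonempty ∧ ConjInvariant D} with h𝒮def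
  have hzorn : ∀ c ⊆ 𝒮, IsChain (· ⊆ ·) c → c.Nonempty →
      ∃ lb ∈ 𝒮, ∀ s ∈ c, lb ⊆ s := by
    intro c hc𝒮 hchain hcne
    have : Nonempty c := hcne.to_subtype
    have hdir : Directed (· ⊇ ·) (fun s : c => (s : Set (Subgroup G))) := by
      rintro ⟨s, hs⟩ ⟨t, ht⟩
      rcases eq_or_ne s t with rfl | hst
      · exact ⟨⟨s, hs⟩, subset_rfl, subset_rfl⟩
      rcases hchain hs ht hst with h | h
      · exact ⟨⟨s, hs⟩, subset_rfl, h⟩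
      · exact ⟨⟨t, ht⟩, h, subset_rfl⟩
    have hne : (⋂ s : c, (s : Set (Subgroup G))).Nonempty :=
      IsCompact.nonempty_iInter_of_directed_nonempty_isCompact_isClosed
        (fun s : c => (s : Set (Subgroup G))) hdir
        (fun s => (hc𝒮 s.2).2.2.1)
        (fun s => (hc𝒮 s.2).2.1.isCompact)
        (fun s => (hc𝒮 s.2).2.1)
    obtain ⟨s₀, hs₀⟩ := hcne
    refine ⟨⋂₀ c, ⟨?_, ?_, ?_, ?_⟩, fun s hs => Set.sInter_subset_of_mem hs⟩
    · exact (Set.sInter_subset_of_mem hs₀).trans (hc𝒮 hs₀).1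
    · exact isClosed_sInter fun s hs => (hc𝒮 hs).2.1
    · rwa [Set.sInter_eq_iInter]
    · intro g H hH
      rw [Set.mem_sInter] at hH ⊢
      intro s hs
      exact (hc𝒮 hs).2.2.2 g H (hH s hs)
  obtain ⟨M, hMsub, hMmin⟩ := zorn_superset_nonempty 𝒮 hzorn S
    ⟨subset_rfl, hSc, ⟨K₀, hK₀S⟩, hSinv⟩
  obtain ⟨⟨hMS, hMc, hMne, hMinv⟩, hmin⟩ := hMmin
  have hMeqC : M = C := by
    refine hCuniq M (hMS.trans Set.inter_subset_left) hMc hMne hMinv ?_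
    intro E hE hEc hEne hEinv
    exact Set.Subset.antisymm hE
      (hmin ⟨hE.trans hMS, hEc, hEne, hEinv⟩ hE)
  obtain ⟨K, hK⟩ := hCne
  have hKS : K ∈ S := hMS (hMeqC ▸ hK)
  obtain ⟨-, H, hH, hle⟩ := hKS
  exact ⟨H, hH, K, hK, hle⟩
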